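/- arXiv:2110.14859 — 5 statements merged into one kernel-verified Lean document; each statement's English description precedes it below -/
import Mathlib

section
/- Let g : [0,k] → ℝ≥0 be a nondecreasing concave function with g(1) > 0, and for y ∈ [1,k] let L_y be a supporting (tangent) line of g at y with nonnegative slope. Then for every z ∈ [y,k], L_y(z) ≤ (z/y)·g(z). In particular L_y provides a (1+ε)-approximation of g on [y, (1+ε)y] ∩ [1,k]. -/
theorem stmt4 (k y M B ε : ℝ) (hk : 1 ≤ k) (g : ℝ → ℝ)
    (hconc : ConcaveOn ℝ (Set.Icc 0 k) g)
    (hnn : ∀ x ∈ Set.Icc (0:ℝ) k, 0 ≤ g x)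
    (hmono : MonotoneOn g (Set.Icc 0 k))
    (hg1 : 0 < g 1)
    (hy : y ∈ Set.Icc (1:ℝ) k)
    (hM : 0 ≤ M) (hB : 0 ≤ B)
    (htan : M * y + B = g y)
    (hup : ∀ x ∈ Set.Icc (0:ℝ) k, g x ≤ M * x + B)
    (hε : 0 ≤ ε) :
    (∀ z ∈ Set.Icc y k, M * z + B ≤ (z / y) * g z) ∧
    (∀ z ∈ Set.Icc y ((1 + ε) * y) ∩ Set.Icc 1 k, M * z + B ≤ (1 + ε) * g z) := by
  obtain ⟨hy1, hyk⟩ := hy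
  have hy0 : 0 < y := lt_of_lt_of_le one_pos hy1
  have main : ∀ z ∈ Set.Icc y k, M * z + B ≤ (z / y) * g z := by
    intro z hz
    obtain ⟨hzy, hzk⟩ := hz
    have hgz : g y ≤ g z := hmono ⟨by linarith, hyk⟩ ⟨by linarith, hzk⟩ hzy
    have hr : 1 ≤ z / y := (one_le_div hy0).2 hzy
    have h1 : M * z + B ≤ (z / y) * g y := by
      rw [← htan]
      have heq : (z / y) * (M * y + B) = M * z + (z / y) * B := by
        field_simp
      rw [heq]
      nlinarith
    calc M * z + B ≤ (z / y) * g y := h1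
      _ ≤ (z / y) * g z := mul_le_mul_of_nonneg_left hgz (by positivity)
  refine ⟨main, ?_⟩
  intro z hz
  obtain ⟨⟨hzy, hz2⟩, hz1, hzk⟩ := hz
  have h1 := main z ⟨hzy, hzk⟩
  have hgz : 0 ≤ g z := hnn z ⟨by linarith, hzk⟩
  have hr : z / y ≤ 1 + ε := (div_le_iff₀ hy0).2 hz2
  calc M * z + B ≤ (z / y) * g z := h1
    _ ≤ (1 + ε) * g z := mul_le_mul_of_nonneg_right hr hgz
end

section
/- With notation as above (g(x) = x(k−x), ε < 1, z ∈ [1,k/2], t = z + √(z(k−z)ε), and z' the larger root of g_t(z') = (1+ε)g(z')), we have z' − z > kε/(1+ε). -/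
theorem stmt9 (k ε z t z' : ℝ) (hk : 0 < k) (hε0 : 0 < ε) (hε1 : ε < 1)
    (hz : z ∈ Set.Icc 1 (k / 2))
    (ht : t = z + Real.sqrt (z * (k - z) * ε))
    (hz' : z' = t / (1 + ε) + k * ε / (2 * (1 + ε))
      + (1 / (2 * (1 + ε))) * Real.sqrt (k ^ 2 * ε ^ 2 + 4 * ε * t * (k - t))) :
    z' - z > k * ε / (1 + ε) := by
  obtain ⟨hz1, hz2⟩ := hz
  have hkz : z ≤ k - z := by linarith
  have hkzpos : 0 < k - z := by linarith
  have h1ε : (0:ℝ) < 1 + ε := by linarith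
  have hεz : ε * z < k - z := by nlinarith
  set s1 := Real.sqrt (z * (k - z) * ε) with hs1def
  have hs1 : ε * z < s1 := by
    have h : (ε * z) ^ 2 < z * (k - z) * ε := by
      nlinarith [mul_lt_mul_of_pos_left hεz (show (0:ℝ) < ε * z by positivity)]
    calc ε * z = Real.sqrt ((ε * z) ^ 2) := (Real.sqrt_sq (by positivity)).symm
      _ < s1 := Real.sqrt_lt_sqrt (by positivity) h
  have hs1le : s1 ≤ k - z := by
    have h : z * (k - z) * ε ≤ (k - z) ^ 2 := by
      nlinarith [mul_lt_mul_of_pos_right hεz hkzpos]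
    calc s1 ≤ Real.sqrt ((k - z) ^ 2) := Real.sqrt_le_sqrt h
      _ = k - z := Real.sqrt_sq hkzpos.le
  have ht0 : 0 < t := by
    rw [ht]; have := Real.sqrt_nonneg (z * (k - z) * ε); linarith
  have htk : t ≤ k := by rw [ht]; linarith
  set s2 := Real.sqrt (k ^ 2 * ε ^ 2 + 4 * ε * t * (k - t)) with hs2def
  have hs2 : k * ε ≤ s2 := by
    have h : (k * ε) ^ 2 ≤ k ^ 2 * ε ^ 2 + 4 * ε * t * (k - t) := by
      nlinarith [mul_nonneg (mul_nonneg hε0.le ht0.le) (sub_nonneg.2 htk)]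
    calc k * ε = Real.sqrt ((k * ε) ^ 2) := (Real.sqrt_sq (by positivity)).symm
      _ ≤ s2 := Real.sqrt_le_sqrt h
  rw [gt_iff_lt, div_lt_iff₀ h1ε, hz']
  have hexp : (t / (1 + ε) + k * ε / (2 * (1 + ε)) + 1 / (2 * (1 + ε)) * s2 - z) * (1 + ε)
      = t + k * ε / 2 + s2 / 2 - z * (1 + ε) := by
    field_simp
  rw [hexp]
  nlinarith [hs1, hs2, ht]
end

section
/- With the same setup, z' − z > (√2/2)·(√(kε)/(1+ε))·√z; i.e., each greedy step covering the interval from z advances by at least (√2/2)·√(kεz)/(1+ε), provided z ≤ k/2. -/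
theorem stmt10 (k ε z t z' : ℝ) (hk : 0 < k) (hε0 : 0 < ε) (hε1 : ε < 1)
    (hz : z ∈ Set.Icc 1 (k / 2))
    (ht : t = z + Real.sqrt (z * (k - z) * ε))
    (hz' : z' = t / (1 + ε) + k * ε / (2 * (1 + ε))
      + (1 / (2 * (1 + ε))) * Real.sqrt (k ^ 2 * ε ^ 2 + 4 * ε * t * (k - t))) :
    z' - z > (Real.sqrt 2 / 2) * (Real.sqrt (k * ε) / (1 + ε)) * Real.sqrt z := by
  obtain ⟨hz1, hz2⟩ := hz
  have hzpos : 0 < z := lt_of_lt_of_le one_pos hz1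
  have hkz : 0 < k - z := by linarith
  have h1ε : (0:ℝ) < 1 + ε := by linarith
  set s := Real.sqrt (z * (k - z) * ε) with hs
  have hsarg : 0 < z * (k - z) * ε := by positivity
  have hspos : 0 < s := Real.sqrt_pos.mpr hsarg
  have hs2 : s ^ 2 = z * (k - z) * ε := Real.sq_sqrt hsarg.le
  set S := Real.sqrt (k ^ 2 * ε ^ 2 + 4 * ε * t * (k - t)) with hS
  -- key lower bound on the radicand
  have hrad : 2 * (k * ε) * z ≤ k ^ 2 * ε ^ 2 + 4 * ε * t * (k - t) := by
    have hid : k ^ 2 * ε ^ 2 + 4 * ε * (z + s) * (k - (z + s)) - 2 * (k * ε) * z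
        = ε * (ε * (k - 2 * z) ^ 2 + 2 * z * (k - 2 * z) + 4 * s * (k - 2 * z)) := by
      linear_combination (-4 * ε) * hs2
    have h2z : (0:ℝ) ≤ k - 2 * z := by linarith
    rw [ht]
    nlinarith [hid, mul_nonneg hε0.le (sq_nonneg (k - 2 * z)),
      mul_nonneg hzpos.le h2z, mul_nonneg hspos.le h2z,
      mul_nonneg hε0.le (mul_nonneg hε0.le (sq_nonneg (k - 2 * z))),
      mul_nonneg hε0.le (mul_nonneg hzpos.le h2z),
      mul_nonneg hε0.le (mul_nonneg hspos.le h2z)]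
  have hBeq : Real.sqrt (2 * (k * ε) * z)
      = Real.sqrt 2 * Real.sqrt (k * ε) * Real.sqrt z := by
    rw [Real.sqrt_mul (by positivity), Real.sqrt_mul (by norm_num)]
  have hSB : Real.sqrt 2 * Real.sqrt (k * ε) * Real.sqrt z ≤ S := by
    rw [← hBeq]; exact Real.sqrt_le_sqrt hrad
  have hA : 0 < t + k * ε / 2 - z * (1 + ε) := by
    rw [ht]; nlinarith
  have hzz : z' - z = (2 * (t + k * ε / 2 - z * (1 + ε)) + S) / (2 * (1 + ε)) := by
    rw [hz']; field_simp; ring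
  have hrhs : (Real.sqrt 2 / 2) * (Real.sqrt (k * ε) / (1 + ε)) * Real.sqrt z
      = (Real.sqrt 2 * Real.sqrt (k * ε) * Real.sqrt z) / (2 * (1 + ε)) := by
    field_simp
  rw [gt_iff_lt, hrhs, hzz, div_lt_div_iff_of_pos_right (by positivity)]
  linarith
end

section
/- Let ℓ' : [0,k] → ℝ≥0 be concave and piecewise linear with J+1 linear pieces of slopes m₁ > m₂ > ⋯ > m_{J+1} and breakpoints B₁ < ⋯ < B_J in (0,k). Then ℓ' equals the combined gadget function with parameters a_i = (m_i − m_{i+1})/k, b_i = B_i, z₀ = ℓ'(0)/k, z_k = ℓ'(k)/k; that is, for all x ∈ [0,k], ℓ'(x) = z₀(k−x) + z_k x + Σ_{i=1}^J a_i·min{x(k−b_i), (k−x)b_i}. -/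
theorem stmt13 (k : ℝ) (hk : 0 < k) (J : ℕ) (hJ : 0 < J)
    (m B : ℕ → ℝ) (ℓ' : ℝ → ℝ)
    (hB0 : B 0 = 0) (hBJ1 : B (J + 1) = k)
    (hBmono : ∀ i ∈ Finset.Icc 0 J, B i < B (i + 1))
    (hm : ∀ i ∈ Finset.Icc 1 J, m (i + 1) < m i)
    (hnn : ∀ x ∈ Set.Icc (0:ℝ) k, 0 ≤ ℓ' x)
    (hconc : ConcaveOn ℝ (Set.Icc 0 k) ℓ')
    (hpieces : ∀ i ∈ Finset.Icc 1 (J + 1), ∀ x ∈ Set.Icc (B (i - 1)) (B i),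
      ℓ' x = ℓ' (B (i - 1)) + m i * (x - B (i - 1))) :
    ∀ x ∈ Set.Icc (0:ℝ) k,
      ℓ' x = (ℓ' 0 / k) * (k - x) + (ℓ' k / k) * x +
        ∑ i ∈ Finset.Icc 1 J, ((m i - m (i + 1)) / k) * min (x * (k - B i)) ((k - x) * B i) := by
  have hk' : (k:ℝ) ≠ 0 := ne_of_gt hk
  set S : ℕ → ℝ := fun j => ∑ i ∈ Finset.Ioc 0 j, m i * (B i - B (i-1)) with hS
  -- monotonicity of B
  have hmono : ∀ i j : ℕ, i ≤ j → j ≤ J+1 → B i ≤ B j := by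
    intro i j hij hjle
    induction j, hij using Nat.le_induction with
    | base => exact le_rfl
    | succ n hn ih =>
      have h1 : B n < B (n+1) := hBmono n (by simp; omega)
      have h2 : B i ≤ B n := ih (by omega)
      linarith
  -- value at breakpoints
  have h1 : ∀ j : ℕ, j ≤ J+1 → ℓ' (B j) = ℓ' 0 + S j := by
    intro j
    induction j with
    | zero => intro _; simp [hS, hB0]
    | succ n ih =>
      intro hn
      have hx := hpieces (n+1) (by simp; omega) (B (n+1))
        ⟨by simpa using hmono n (n+1) (by omega) hn, le_rfl⟩
      simp only [Nat.add_sub_cancel] at hx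
      rw [hx, ih (by omega)]
      simp only [hS]
      rw [Finset.sum_Ioc_succ_top (Nat.zero_le n)]
      simp only [Nat.add_sub_cancel]
      ring
  -- telescoping identity A
  have hA : ∀ j : ℕ, ∑ i ∈ Finset.Ioc 0 j, (m i - m (i+1)) * B i = S j - m (j+1) * B j := by
    intro j
    induction j with
    | zero => simp [hS, hB0]
    | succ n ih =>
      rw [Finset.sum_Ioc_succ_top (Nat.zero_le n), ih]
      simp only [hS, Finset.sum_Ioc_succ_top (Nat.zero_le n), Nat.add_sub_cancel]
      ring
  -- telescoping identity B
  have hL : ∀ j n : ℕ, j ≤ n →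
      ∑ i ∈ Finset.Ioc j n, (m i - m (i+1)) * (k - B i)
        = m (j+1) * (k - B j) - m (n+1) * (k - B n)
          - ∑ i ∈ Finset.Ioc j n, m i * (B i - B (i-1)) := by
    intro j n hjn
    induction n, hjn using Nat.le_induction with
    | base => simp
    | succ n hn ih =>
      rw [Finset.sum_Ioc_succ_top hn, Finset.sum_Ioc_succ_top hn, ih]
      simp only [Nat.add_sub_cancel]
      ring
  have hSk : ℓ' k = ℓ' 0 + S (J+1) := by
    have := h1 (J+1) le_rfl
    rwa [hBJ1] at this
  have hSJ1 : S (J+1) = S J + m (J+1) * (k - B J) := by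
    simp only [hS]
    rw [Finset.sum_Ioc_succ_top (Nat.zero_le J)]
    simp only [Nat.add_sub_cancel, hBJ1]
  -- main computation on piece j+1
  have main : ∀ j : ℕ, j ≤ J → ∀ x : ℝ, B j ≤ x → x ≤ B (j+1) →
      ℓ' x = (ℓ' 0 / k) * (k - x) + (ℓ' k / k) * x +
        ∑ i ∈ Finset.Icc 1 J, ((m i - m (i + 1)) / k) * min (x * (k - B i)) ((k - x) * B i) := by
    intro j hj x hx1 hx2
    have hxk : x ≤ k := by
      have := hmono (j+1) (J+1) (by omega) le_rfl
      rw [hBJ1] at this; linarith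
    have hx0 : (0:ℝ) ≤ x := by
      have := hmono 0 j (Nat.zero_le j) (by omega)
      rw [hB0] at this; linarith
    have hL1 : ℓ' x = ℓ' 0 + S j + m (j+1) * (x - B j) := by
      have hp := hpieces (j+1) (by simp; omega) x (by
        simp only [Nat.add_sub_cancel]; exact ⟨hx1, hx2⟩)
      simp only [Nat.add_sub_cancel] at hp
      rw [hp, h1 j (by omega)]
    have hsplit : Finset.Icc 1 J = Finset.Ioc 0 J := by
      ext i; simp; omega
    have e1 : ∑ i ∈ Finset.Ioc 0 j, ((m i - m (i + 1)) / k) * min (x * (k - B i)) ((k - x) * B i)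
        = ((k - x)/k) * (S j - m (j+1) * B j) := by
      rw [← hA j, Finset.mul_sum]
      refine Finset.sum_congr rfl ?_
      intro i hi
      simp only [Finset.mem_Ioc] at hi
      have hBi : B i ≤ x := le_trans (hmono i j hi.2 (by omega)) hx1
      rw [min_eq_right (by nlinarith)]
      ring
    have e2 : ∑ i ∈ Finset.Ioc j J, ((m i - m (i + 1)) / k) * min (x * (k - B i)) ((k - x) * B i)
        = (x/k) * (m (j+1) * (k - B j) - m (J+1) * (k - B J)
            - ∑ i ∈ Finset.Ioc j J, m i * (B i - B (i-1))) := by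
      rw [← hL j J hj, Finset.mul_sum]
      refine Finset.sum_congr rfl ?_
      intro i hi
      simp only [Finset.mem_Ioc] at hi
      have hBi : x ≤ B i := le_trans hx2 (hmono (j+1) i (by omega) (by omega))
      rw [min_eq_left (by nlinarith)]
      ring
    have hsum2 : ∑ i ∈ Finset.Ioc j J, m i * (B i - B (i-1)) = S J - S j := by
      have := Finset.sum_Ioc_consecutive (fun i => m i * (B i - B (i-1)))
        (Nat.zero_le j) hj
      simp only [hS]
      linarith [this]
    rw [hL1, hsplit, ← Finset.sum_Ioc_consecutive _ (Nat.zero_le j) hj, e1, e2, hsum2,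
      hSk, hSJ1]
    field_simp
    ring
  -- wrapper induction
  have wrap : ∀ j : ℕ, j ≤ J+1 → ∀ x : ℝ, 0 ≤ x → x ≤ B j →
      ℓ' x = (ℓ' 0 / k) * (k - x) + (ℓ' k / k) * x +
        ∑ i ∈ Finset.Icc 1 J, ((m i - m (i + 1)) / k) * min (x * (k - B i)) ((k - x) * B i) := by
    intro j
    induction j with
    | zero =>
      intro _ x hx0 hx1
      rw [hB0] at hx1
      have hx : x = 0 := le_antisymm hx1 hx0
      subst hx
      have hzero : ∀ i ∈ Finset.Icc 1 J,
          ((m i - m (i + 1)) / k) * min ((0:ℝ) * (k - B i)) ((k - 0) * B i) = 0 := by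
        intro i hi
        simp only [Finset.mem_Icc] at hi
        have hBi : 0 ≤ B i := by
          have := hmono 0 i (Nat.zero_le i) (by omega)
          rwa [hB0] at this
        rw [zero_mul, min_eq_left (by nlinarith)]
        ring
      rw [Finset.sum_eq_zero hzero]
      field_simp
      ring
    | succ n ih =>
      intro hn x hx0 hx1
      by_cases hcase : x ≤ B n
      · exact ih (by omega) x hx0 hcase
      · exact main n (by omega) x (le_of_not_ge hcase) hx1
  intro x hx
  exact wrap (J+1) le_rfl x hx.1 (by rw [hBJ1]; exact hx.2)
end

section
/- Let G be a directed graph with source s, sink t, and node set V ∪ 𝓐 ∪ {s,t}, built as a disjoint union over e ∈ E of gadgets G_e on nodes e ∪ 𝓐_e ∪ {s,t} (the 𝓐_e pairwise disjoint, edges of distinct gadgets sharing only nodes in V ∪ {s,t}). If each gadget satisfies min_{B ⊆ 𝓐_e} cut_{G_e}({s} ∪ B ∪ A) = ℓ_e(|A|) for all A ⊆ e, then the minimum over T ⊆ V ∪ 𝓐 of cut_G({s} ∪ T) restricted to T ∩ V = S equals Σ_{e∈E} ℓ_e(|S ∩ e|), and hence the min s-t cut of G restricted to V minimizes S ↦ Σ_e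 ℓ_e(|S∩e|). -/
open Finset

/-- The value of a cut in a weighted directed graph: total weight of edges
leaving the set `X`. -/
def cutVal {N : Type*} [Fintype N] [DecidableEq N] (w : N → N → ℝ) (X : Finset N) : ℝ :=
  ∑ u ∈ X, ∑ v ∈ Xᶜ, w u v

/-- Node of the reduced graph coming from the ground set `V`. -/
def vnode (V ι : Type*) (A : ι → Type*) (v : V) : (V ⊕ ((i : ι) × A i)) ⊕ Bool :=
  Sum.inl (Sum.inl v)

/-- Auxiliary node of the gadget indexed by `i`. -/
def anode (V ι : Type*) (A : ι → Type*) (i : ι) (x : A i) : (V ⊕ ((i : ι) × A i)) ⊕ Bool :=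
  Sum.inl (Sum.inr ⟨i, x⟩)

/-- The source node `s`. -/
def snode (V ι : Type*) (A : ι → Type*) : (V ⊕ ((i : ι) × A i)) ⊕ Bool := Sum.inr true

/-- The sink node `t`. -/
def tnode (V ι : Type*) (A : ι → Type*) : (V ⊕ ((i : ι) × A i)) ⊕ Bool := Sum.inr false

/-- The node set of the gadget for `e i`: the nodes of `e i`, the auxiliary
nodes `A i`, and the source and sink. -/
def gadgetNodes (V ι : Type*) [Fintype V] [DecidableEq V] [Fintype ι] [DecidableEq ι]
    (A : ι → Type*) [∀ i, Fintype (A i)] [∀ i, DecidableEq (A i)]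
    (e : ι → Finset V) (i : ι) : Finset ((V ⊕ ((i : ι) × A i)) ⊕ Bool) :=
  (e i).image (vnode V ι A) ∪ (Finset.univ.image (anode V ι A i)) ∪
    {snode V ι A, tnode V ι A}

section Helpers

variable {N : Type*} [Fintype N] [DecidableEq N]

lemma cutVal_sum {ι : Type*} [Fintype ι] (w : ι → N → N → ℝ) (X : Finset N) :
    cutVal (fun u v => ∑ i, w i u v) X = ∑ i, cutVal (w i) X := by
  unfold cutVal
  rw [eq_comm, Finset.sum_comm]
  exact Finset.sum_congr rfl fun u _ => Finset.sum_comm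

lemma cutVal_restrict (w : N → N → ℝ) (G X : Finset N)
    (hw : ∀ u v, w u v ≠ 0 → u ∈ G ∧ v ∈ G) :
    cutVal w X = ∑ u ∈ X ∩ G, ∑ v ∈ G \ X, w u v := by
  unfold cutVal
  have h1 : ∀ u, ∑ v ∈ Xᶜ, w u v = ∑ v ∈ G \ X, w u v := by
    intro u
    rw [show G \ X = Xᶜ ∩ G by ext x; simp [and_comm]]
    refine (Finset.sum_subset inter_subset_left (fun v hv hv' => ?_)).symm
    by_contra h
    exact hv' (mem_inter.2 ⟨hv, (hw u v h).2⟩)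
  simp_rw [h1]
  refine (Finset.sum_subset inter_subset_left (fun u hu hu' => ?_)).symm
  refine Finset.sum_eq_zero fun v _ => ?_
  by_contra h
  exact hu' (mem_inter.2 ⟨hu, (hw u v h).1⟩)

lemma cutVal_congr (w : N → N → ℝ) (G X Y : Finset N)
    (hw : ∀ u v, w u v ≠ 0 → u ∈ G ∧ v ∈ G) (h : X ∩ G = Y ∩ G) :
    cutVal w X = cutVal w Y := by
  have hX : G \ X = G \ (X ∩ G) := by ext x; simp
  have hY : G \ Y = G \ (Y ∩ G) := by ext x; simp
  rw [cutVal_restrict w G X hw, cutVal_restrict w G Y hw, hX, hY, h]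

end Helpers

theorem stmt16
    (V ι : Type*) [Fintype V] [DecidableEq V] [Fintype ι] [DecidableEq ι]
    (A : ι → Type*) [∀ i, Fintype (A i)] [∀ i, DecidableEq (A i)]
    (e : ι → Finset V)
    (w : ι → ((V ⊕ ((i : ι) × A i)) ⊕ Bool) → ((V ⊕ ((i : ι) × A i)) ⊕ Bool) → ℝ)
    (ℓ : ι → ℕ → ℝ)
    -- each gadget's edges only involve that gadget's nodes
    (hsupp : ∀ i u v, w i u v ≠ 0 →
      u ∈ gadgetNodes V ι A e i ∧ v ∈ gadgetNodes V ι A e i)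
    -- each gadget models ℓ i : placing `S ⊆ e i` on the source side, the
    -- minimum cut over placements of the auxiliary nodes is ℓ i |S|
    (hgadget : ∀ i : ι, ∀ S ⊆ e i,
      IsLeast {c : ℝ | ∃ B : Finset (A i),
        c = cutVal (w i)
          (insert (snode V ι A) (S.image (vnode V ι A) ∪ B.image (anode V ι A i)))}
        (ℓ i S.card)) :
    -- (1) the minimum s-t cut value among cuts whose source side meets V in S
    --     is ∑ e ℓ_e(|S ∩ e|)
    (∀ S : Finset V,
      IsLeast {c : ℝ | ∃ T : Finset ((V ⊕ ((i : ι) × A i)) ⊕ Bool),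
        snode V ι A ∈ T ∧ tnode V ι A ∉ T ∧
        Finset.univ.filter (fun v : V => vnode V ι A v ∈ T) = S ∧
        c = cutVal (fun u v => ∑ i, w i u v) T}
        (∑ i, ℓ i ((S ∩ e i).card))) ∧
    -- (2) hence the restriction to V of a minimum s-t cut minimizes
    --     S ↦ ∑ e ℓ_e(|S ∩ e|)
    (∀ T : Finset ((V ⊕ ((i : ι) × A i)) ⊕ Bool),
      snode V ι A ∈ T → tnode V ι A ∉ T →
      (∀ T' : Finset ((V ⊕ ((i : ι) × A i)) ⊕ Bool),
        snode V ι A ∈ T' → tnode V ι A ∉ T' →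
        cutVal (fun u v => ∑ i, w i u v) T ≤ cutVal (fun u v => ∑ i, w i u v) T') →
      ∀ S : Finset V,
        ∑ i, ℓ i (((Finset.univ.filter (fun v : V => vnode V ι A v ∈ T)) ∩ e i).card)
          ≤ ∑ i, ℓ i ((S ∩ e i).card)) := by
  classical
  -- T ∩ (gadget i) in terms of the filters of T
  have key : ∀ (T : Finset ((V ⊕ ((i : ι) × A i)) ⊕ Bool)),
      snode V ι A ∈ T → tnode V ι A ∉ T → ∀ i : ι,
      T ∩ gadgetNodes V ι A e i =
        insert (snode V ι A)
          (((univ.filter (fun v : V => vnode V ι A v ∈ T)) ∩ e i).image (vnode V ι A)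
            ∪ (univ.filter (fun x : A i => anode V ι A i x ∈ T)).image (anode V ι A i)) := by
    intro T hs ht i
    ext n
    rcases n with (v | ⟨j, x⟩) | b
    · simp [gadgetNodes, vnode, anode, snode, tnode]
      intro _
      exact (Finset.mem_filter.trans (by simp)).symm
    · by_cases hij : i = j
      · subst hij
        simp [gadgetNodes, vnode, anode, snode, tnode]
        exact (Finset.mem_filter.trans (by simp)).symm
      · simp [gadgetNodes, vnode, anode, snode, tnode, hij, Ne.symm hij]
    · cases b
      · simp only [gadgetNodes, vnode, anode, snode, tnode, mem_inter, mem_union,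
          mem_image, mem_insert, mem_singleton, mem_filter, mem_univ, true_and]
        simp
        exact ht
      · simp only [gadgetNodes, vnode, anode, snode, tnode, mem_inter, mem_union,
          mem_image, mem_insert, mem_singleton, mem_filter, mem_univ, true_and]
        simp
        exact hs
  have hsub : ∀ (i : ι) (S' : Finset V), S' ⊆ e i → ∀ B : Finset (A i),
      insert (snode V ι A) (S'.image (vnode V ι A) ∪ B.image (anode V ι A i)) ⊆
        gadgetNodes V ι A e i := by
    intro i S' hS B n hn
    simp only [mem_insert, mem_union, mem_image] at hn
    simp only [gadgetNodes, mem_union, mem_image, mem_insert, mem_singleton, mem_univ,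
      true_and]
    rcases hn with rfl | ⟨a, ha, rfl⟩ | ⟨x, _, rfl⟩
    · exact Or.inr (Or.inl rfl)
    · exact Or.inl (Or.inl ⟨a, hS ha, rfl⟩)
    · exact Or.inl (Or.inr ⟨x, rfl⟩)
  have main : ∀ (T : Finset ((V ⊕ ((i : ι) × A i)) ⊕ Bool)),
      snode V ι A ∈ T → tnode V ι A ∉ T →
      cutVal (fun u v => ∑ i, w i u v) T =
        ∑ i, cutVal (w i)
          (insert (snode V ι A)
            (((univ.filter (fun v : V => vnode V ι A v ∈ T)) ∩ e i).image (vnode V ι A)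
              ∪ (univ.filter (fun x : A i => anode V ι A i x ∈ T)).image (anode V ι A i))) := by
    intro T hs ht
    rw [cutVal_sum]
    refine Finset.sum_congr rfl fun i _ => ?_
    refine cutVal_congr (w i) (gadgetNodes V ι A e i) _ _ (hsupp i) ?_
    rw [key T hs ht i, inter_eq_left.2 (hsub i _ inter_subset_right _)]
  have part1 : ∀ S : Finset V,
      IsLeast {c : ℝ | ∃ T : Finset ((V ⊕ ((i : ι) × A i)) ⊕ Bool),
        snode V ι A ∈ T ∧ tnode V ι A ∉ T ∧
        Finset.univ.filter (fun v : V => vnode V ι A v ∈ T) = S ∧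
        c = cutVal (fun u v => ∑ i, w i u v) T}
        (∑ i, ℓ i ((S ∩ e i).card)) := by
    intro S
    constructor
    · -- achieved by an explicit cut
      choose B hB using fun i => (hgadget i (S ∩ e i) inter_subset_right).1
      set T0 : Finset ((V ⊕ ((i : ι) × A i)) ⊕ Bool) :=
        insert (snode V ι A)
          (S.image (vnode V ι A) ∪
            (univ.sigma B).image (fun p => (Sum.inl (Sum.inr p) : (V ⊕ ((i : ι) × A i)) ⊕ Bool)))
        with hT0
      have hT0s : snode V ι A ∈ T0 := mem_insert_self _ _
      have hT0t : tnode V ι A ∉ T0 := by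
        simp [hT0, snode, tnode, vnode, anode]
      have hfilter : univ.filter (fun v : V => vnode V ι A v ∈ T0) = S := by
        ext v
        simp [hT0, snode, vnode, anode]
      have hafilter : ∀ i, univ.filter (fun x : A i => anode V ι A i x ∈ T0) = B i := by
        intro i
        ext x
        simp [hT0, snode, vnode, anode, Finset.mem_sigma]
      refine ⟨T0, hT0s, hT0t, hfilter, ?_⟩
      rw [main T0 hT0s hT0t]
      refine Finset.sum_congr rfl fun i _ => ?_
      rw [hfilter, hafilter i]
      exact hB i
    · rintro c ⟨T, hs, ht, hfil, rfl⟩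
      rw [main T hs ht]
      refine Finset.sum_le_sum fun i _ => ?_
      exact (hgadget i (S ∩ e i) inter_subset_right).2 ⟨_, by rw [hfil]⟩
  refine ⟨part1, ?_⟩
  intro T hs ht hmin S
  have h1 := (part1 (univ.filter (fun v : V => vnode V ι A v ∈ T))).2
    ⟨T, hs, ht, rfl, rfl⟩
  obtain ⟨T', hs', ht', _, hc'⟩ := (part1 S).1
  exact h1.trans ((hmin T' hs' ht').trans_eq hc'.symm)
end
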